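/- Let P be a lattice triangle whose boundary contains exactly 5 lattice points and which has at least 4 interior lattice points. Then one edge of P has discrete length 3 and the other two edges have discrete length 1; in particular, P is lattice-isomorphic to a triangle with vertices (0,0), (3,0), (c,d) where d > 0 and gcd(c,d) = gcd(c-3,d) = 1. -/

import Mathlib

noncomputable section

/-- The inclusion of the lattice `ℤ²` into `ℝ²`. -/
def latticeEmbed : ℤ × ℤ → ℝ × ℝ := fun p => ((p.1 : ℝ), (p.2 : ℝ))

/-- Twice the signed area of the lattice triangle `p q r`. -/
def det2 (p q r : ℤ × ℤ) : ℤ :=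
  (q.1 - p.1) * (r.2 - p.2) - (q.2 - p.2) * (r.1 - p.1)

/-- The closed triangle in `ℝ²` with the given lattice vertices. -/
def triZ (u v w : ℤ × ℤ) : Set (ℝ × ℝ) :=
  convexHull ℝ {latticeEmbed u, latticeEmbed v, latticeEmbed w}

open Set
lemma det2_cyc (a b c : ℤ × ℤ) : det2 b c a = det2 a b c := by unfold det2; ring

lemma affInd (a b c : ℤ × ℤ) (h : det2 a b c ≠ 0) :
    AffineIndependent ℝ ![latticeEmbed a, latticeEmbed b, latticeEmbed c] := by
  rw [affineIndependent_iff_not_collinear]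
  intro hcol
  obtain ⟨p0, v, hv⟩ := (collinear_iff_exists_forall_eq_smul_vadd _).mp hcol
  obtain ⟨ta, hta⟩ := hv (latticeEmbed a) (by simp)
  obtain ⟨tb, htb⟩ := hv (latticeEmbed b) (by simp)
  obtain ⟨tc, htc⟩ := hv (latticeEmbed c) (by simp)
  apply h
  have hcast : ((det2 a b c : ℤ) : ℝ) =
      ((b.1 : ℝ) - a.1) * ((c.2 : ℝ) - a.2) - ((b.2 : ℝ) - a.2) * ((c.1 : ℝ) - a.1) := by
    unfold det2; push_cast; ring
  have e1 := congrArg Prod.fst hta; have e2 := congrArg Prod.snd hta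
  have e3 := congrArg Prod.fst htb; have e4 := congrArg Prod.snd htb
  have e5 := congrArg Prod.fst htc; have e6 := congrArg Prod.snd htc
  simp [latticeEmbed, Prod.smul_def] at e1 e2 e3 e4 e5 e6
  have hb1 : (b.1 : ℝ) - a.1 = (tb - ta) * v.1 := by rw [e3, e1]; ring
  have hb2 : (b.2 : ℝ) - a.2 = (tb - ta) * v.2 := by rw [e4, e2]; ring
  have hc1 : (c.1 : ℝ) - a.1 = (tc - ta) * v.1 := by rw [e5, e1]; ring
  have hc2 : (c.2 : ℝ) - a.2 = (tc - ta) * v.2 := by rw [e6, e2]; ring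
  have : ((det2 a b c : ℤ) : ℝ) = 0 := by rw [hcast, hb1, hb2, hc1, hc2]; ring
  exact_mod_cast this

/-- lattice points on the closed segment from `u` to `v` -/
def segPts (u v : ℤ × ℤ) : Set (ℤ × ℤ) :=
  {z | latticeEmbed z ∈ segment ℝ (latticeEmbed u) (latticeEmbed v)}

lemma segPts_symm (u v : ℤ × ℤ) : segPts u v = segPts v u := by
  unfold segPts; simp [segment_symm]

lemma prim_dvd (w1 w2 d1 d2 : ℤ) (hw : Int.gcd w1 w2 = 1) (hc : w1 * d2 = w2 * d1) :
    ∃ m : ℤ, d1 = m * w1 ∧ d2 = m * w2 := by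
  have hbez : w1 * Int.gcdA w1 w2 + w2 * Int.gcdB w1 w2 = 1 := by
    have := Int.gcd_eq_gcd_ab w1 w2
    rw [hw] at this; push_cast at this; linarith
  set s := Int.gcdA w1 w2
  set t := Int.gcdB w1 w2
  refine ⟨s * d1 + t * d2, ?_, ?_⟩
  · linear_combination (-d1) * hbez + (-t) * hc
  · linear_combination (-d2) * hbez + s * hc

lemma cross_of_mem_segPts (u v z : ℤ × ℤ) (h : z ∈ segPts u v) :
    (z.1 - u.1) * (v.2 - u.2) = (z.2 - u.2) * (v.1 - u.1) := by
  rw [segPts, mem_setOf_eq, segment_eq_image'] at h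
  obtain ⟨θ, hθ, hz⟩ := h
  have h1 : (z.1 : ℝ) - u.1 = θ * ((v.1 : ℝ) - u.1) := by
    have := congrArg Prod.fst hz; simp [latticeEmbed] at this; linarith
  have h2 : (z.2 : ℝ) - u.2 = θ * ((v.2 : ℝ) - u.2) := by
    have := congrArg Prod.snd hz; simp [latticeEmbed] at this; linarith
  have : ((z.1 - u.1) * (v.2 - u.2) : ℤ) = ((z.2 - u.2) * (v.1 - u.1) : ℤ) := by
    have : (((z.1 - u.1) * (v.2 - u.2) : ℤ) : ℝ) = (((z.2 - u.2) * (v.1 - u.1) : ℤ) : ℝ) := by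
      push_cast; rw [h1, h2]; ring
    exact_mod_cast this
  exact this

lemma gcd_decomp (u v : ℤ × ℤ) (huv : u ≠ v) :
    ∃ w1 w2 : ℤ, 0 < Int.gcd (v.1 - u.1) (v.2 - u.2) ∧
      v.1 - u.1 = (Int.gcd (v.1 - u.1) (v.2 - u.2) : ℤ) * w1 ∧
      v.2 - u.2 = (Int.gcd (v.1 - u.1) (v.2 - u.2) : ℤ) * w2 ∧
      Int.gcd w1 w2 = 1 := by
  set g : ℕ := Int.gcd (v.1 - u.1) (v.2 - u.2) with hg
  have hgpos : 0 < g := by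
    rcases Nat.eq_zero_or_pos g with h0 | h
    · exfalso
      rw [hg, Int.gcd_eq_zero_iff] at h0
      apply huv
      have h1 : v.1 = u.1 := by omega
      have h2 : v.2 = u.2 := by omega
      exact Prod.ext h1.symm h2.symm |>.symm ▸ rfl
    · exact h
  have hd1 : (g : ℤ) ∣ v.1 - u.1 := (Int.gcd_dvd_left _ _)
  have hd2 : (g : ℤ) ∣ v.2 - u.2 := (Int.gcd_dvd_right _ _)
  refine ⟨(v.1 - u.1) / g, (v.2 - u.2) / g, hgpos, (Int.mul_ediv_cancel' hd1).symm,
    (Int.mul_ediv_cancel' hd2).symm, ?_⟩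
  exact Int.gcd_div_gcd_div_gcd (by exact_mod_cast hgpos)

lemma segPts_eq (u v : ℤ × ℤ) (g : ℕ) (w1 w2 : ℤ)
    (hg : Int.gcd (v.1 - u.1) (v.2 - u.2) = g) (hgpos : 0 < g)
    (hw1 : v.1 - u.1 = (g : ℤ) * w1) (hw2 : v.2 - u.2 = (g : ℤ) * w2)
    (hwprim : Int.gcd w1 w2 = 1) :
    segPts u v = (fun k : ℤ => ((u.1 + k * w1, u.2 + k * w2) : ℤ × ℤ)) '' (Set.Icc (0:ℤ) g) := by
  have hgR : ((g : ℤ) : ℝ) ≠ 0 := by positivity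
  have hwne : w1 ≠ 0 ∨ w2 ≠ 0 := by
    by_contra hcon
    push_neg at hcon
    rw [hcon.1, hcon.2] at hwprim
    simp [Int.gcd] at hwprim
  ext z
  constructor
  · intro hz
    have hcross := cross_of_mem_segPts u v z hz
    rw [segPts, mem_setOf_eq, segment_eq_image'] at hz
    obtain ⟨θ, hθ, hzeq⟩ := hz
    have h1 : (z.1 : ℝ) - u.1 = θ * ((v.1 : ℝ) - u.1) := by
      have := congrArg Prod.fst hzeq; simp [latticeEmbed, Prod.smul_def] at this; linarith
    have h2 : (z.2 : ℝ) - u.2 = θ * ((v.2 : ℝ) - u.2) := by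
      have := congrArg Prod.snd hzeq; simp [latticeEmbed, Prod.smul_def] at this; linarith
    rw [hw1, hw2] at hcross
    have hgZ : (g : ℤ) ≠ 0 := by exact_mod_cast hgpos.ne'
    have hcross' : w1 * (z.2 - u.2) = w2 * (z.1 - u.1) := by
      apply mul_left_cancel₀ hgZ
      linear_combination -hcross
    obtain ⟨m, hm1, hm2⟩ := prim_dvd w1 w2 (z.1 - u.1) (z.2 - u.2) hwprim hcross'
    have H1 : (z.1 : ℝ) - u.1 = (m : ℝ) * w1 := by exact_mod_cast hm1
    have H2 : (z.2 : ℝ) - u.2 = (m : ℝ) * w2 := by exact_mod_cast hm2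
    have HW1 : (v.1 : ℝ) - u.1 = (g : ℝ) * w1 := by exact_mod_cast hw1
    have HW2 : (v.2 : ℝ) - u.2 = (g : ℝ) * w2 := by exact_mod_cast hw2
    have hmθ : (m : ℝ) = θ * g := by
      rcases hwne with hw | hw
      · have hw1R : (w1 : ℝ) ≠ 0 := by exact_mod_cast hw
        apply mul_right_cancel₀ hw1R
        rw [← H1, h1, HW1]; ring
      · have hw2R : (w2 : ℝ) ≠ 0 := by exact_mod_cast hw
        apply mul_right_cancel₀ hw2R
        rw [← H2, h2, HW2]; ring
    have hm0 : (0 : ℤ) ≤ m := by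
      have : (0 : ℝ) ≤ (m : ℝ) := by
        rw [hmθ]; exact mul_nonneg hθ.1 (by positivity)
      exact_mod_cast this
    have hmg : m ≤ (g : ℤ) := by
      have : (m : ℝ) ≤ (g : ℝ) := by
        rw [hmθ]
        calc θ * g ≤ 1 * g := mul_le_mul_of_nonneg_right hθ.2 (by positivity)
          _ = g := one_mul _
      exact_mod_cast this
    exact ⟨m, ⟨hm0, hmg⟩, by
      apply Prod.ext <;> simp <;> omega⟩
  · rintro ⟨k, ⟨hk0, hkg⟩, rfl⟩
    have HW1 : (v.1 : ℝ) - u.1 = (g : ℝ) * w1 := by exact_mod_cast hw1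
    have HW2 : (v.2 : ℝ) - u.2 = (g : ℝ) * w2 := by exact_mod_cast hw2
    rw [segPts, mem_setOf_eq, segment_eq_image']
    refine ⟨(k : ℝ) / g, ⟨by positivity, ?_⟩, ?_⟩
    · rw [div_le_one (by positivity)]
      exact_mod_cast hkg
    · apply Prod.ext
      · show (u.1 : ℝ) + (k : ℝ) / g * ((v.1 : ℝ) - u.1) = ((u.1 + k * w1 : ℤ) : ℝ)
        rw [HW1]
        push_cast
        field_simp
      · show (u.2 : ℝ) + (k : ℝ) / g * ((v.2 : ℝ) - u.2) = ((u.2 + k * w2 : ℤ) : ℝ)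
        rw [HW2]
        push_cast
        field_simp

lemma segPts_ncard (u v : ℤ × ℤ) (huv : u ≠ v) :
    (segPts u v).ncard = Int.gcd (v.1 - u.1) (v.2 - u.2) + 1 := by
  obtain ⟨w1, w2, hgpos, hw1, hw2, hwprim⟩ := gcd_decomp u v huv
  set g : ℕ := Int.gcd (v.1 - u.1) (v.2 - u.2) with hg
  rw [segPts_eq u v g w1 w2 rfl hgpos hw1 hw2 hwprim]
  have hwne : w1 ≠ 0 ∨ w2 ≠ 0 := by
    by_contra hcon
    push_neg at hcon
    rw [hcon.1, hcon.2] at hwprim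
    simp [Int.gcd] at hwprim
  have hinj : Set.InjOn (fun k : ℤ => ((u.1 + k * w1, u.2 + k * w2) : ℤ × ℤ)) (Set.Icc (0:ℤ) g) := by
    intro x _ y _ hxy
    simp only [Prod.mk.injEq] at hxy
    rcases hwne with hw | hw
    · have : x * w1 = y * w1 := by omega
      exact mul_right_cancel₀ hw this
    · have : x * w2 = y * w2 := by omega
      exact mul_right_cancel₀ hw this
  rw [Set.ncard_image_of_injOn hinj, ← Finset.coe_Icc, Set.ncard_coe_finset, Int.card_Icc]
  simp

lemma segPts_finite (u v : ℤ × ℤ) (huv : u ≠ v) : (segPts u v).Finite := by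
  obtain ⟨w1, w2, hgpos, hw1, hw2, hwprim⟩ := gcd_decomp u v huv
  rw [segPts_eq u v _ w1 w2 rfl hgpos hw1 hw2 hwprim]
  exact ((Set.finite_Icc _ _).image _)

lemma segPts_inter (a b c : ℤ × ℤ) (h : det2 a b c ≠ 0) :
    segPts a b ∩ segPts b c = {b} := by
  apply Set.eq_singleton_iff_unique_mem.mpr
  constructor
  · exact ⟨right_mem_segment ℝ _ _, left_mem_segment ℝ _ _⟩
  · rintro z ⟨hz1, hz2⟩
    have cross1 := cross_of_mem_segPts a b z hz1
    have cross2 := cross_of_mem_segPts b c z hz2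
    have h1 : det2 a b c * (z.1 - b.1) = 0 := by
      unfold det2
      linear_combination (-(c.1 - b.1)) * cross1 + (b.1 - a.1) * cross2
    have h2 : det2 a b c * (z.2 - b.2) = 0 := by
      unfold det2
      linear_combination (-(c.2 - b.2)) * cross1 + (b.2 - a.2) * cross2
    have e1 : z.1 = b.1 := by
      rcases mul_eq_zero.mp h1 with h' | h'
      · exact absurd h' h
      · omega
    have e2 : z.2 = b.2 := by
      rcases mul_eq_zero.mp h2 with h' | h'
      · exact absurd h' h
      · omega
    exact Prod.ext e1 e2

def triBasis (A B C : ℝ × ℝ) (h : AffineIndependent ℝ ![A, B, C]) :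
    AffineBasis (Fin 3) ℝ (ℝ × ℝ) :=
  ⟨![A, B, C], h, h.affineSpan_eq_top_iff_card_eq_finrank_add_one.mpr (by simp)⟩

lemma frontier_tri (A B C : ℝ × ℝ) (h : AffineIndependent ℝ ![A, B, C]) :
    frontier (convexHull ℝ {A, B, C}) =
      segment ℝ A B ∪ segment ℝ B C ∪ segment ℝ C A := by
  set b := triBasis A B C h with hbdef
  have hb0 : b 0 = A := rfl
  have hb1 : b 1 = B := rfl
  have hb2 : b 2 = C := rfl
  have rng : Set.range (b : Fin 3 → ℝ × ℝ) = {A, B, C} := by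
    show Set.range ![A, B, C] = {A, B, C}
    ext y
    simp only [Matrix.range_cons, Matrix.range_empty, Set.union_empty, Set.mem_insert_iff,
      Set.mem_singleton_iff, Set.mem_union]
  have hclosed : IsClosed (convexHull ℝ ({A, B, C} : Set (ℝ × ℝ))) :=
    (Set.toFinite _).isClosed_convexHull (𝕜 := ℝ)
  have hhull : convexHull ℝ ({A, B, C} : Set (ℝ × ℝ)) = {x | ∀ i, 0 ≤ b.coord i x} := by
    rw [← rng, b.convexHull_eq_nonneg_coord]
  have hint : interior (convexHull ℝ ({A, B, C} : Set (ℝ × ℝ))) = {x | ∀ i, 0 < b.coord i x} := by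
    rw [← rng, b.interior_convexHull]
  have hcA : ∀ i, b.coord i A = if i = 0 then 1 else 0 := fun i => by
    rw [← hb0]; exact b.coord_apply i 0
  have hcB : ∀ i, b.coord i B = if i = 1 then 1 else 0 := fun i => by
    rw [← hb1]; exact b.coord_apply i 1
  have hcC : ∀ i, b.coord i C = if i = 2 then 1 else 0 := fun i => by
    rw [← hb2]; exact b.coord_apply i 2
  rw [hclosed.frontier_eq, hint]
  ext x
  constructor
  · rintro ⟨hx, hnx⟩
    rw [hhull] at hx
    simp only [mem_setOf_eq, not_forall, not_lt] at hnx
    obtain ⟨i, hi⟩ := hnx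
    have hi0 : b.coord i x = 0 := le_antisymm hi (hx i)
    have hsum := b.sum_coord_apply_eq_one x
    rw [Fin.sum_univ_three] at hsum
    have hrep := b.linear_combination_coord_eq_self x
    rw [Fin.sum_univ_three, hb0, hb1, hb2] at hrep
    have hic : i = 0 ∨ i = 1 ∨ i = 2 := by fin_cases i <;> simp
    rcases hic with rfl | rfl | rfl <;> rw [hi0] at hsum hrep
    · refine Or.inl (Or.inr ⟨b.coord 1 x, b.coord 2 x, hx 1, hx 2, by linarith, ?_⟩)
      conv_rhs => rw [← hrep]
      module
    · refine Or.inr ⟨b.coord 2 x, b.coord 0 x, hx 2, hx 0, by linarith, ?_⟩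
      conv_rhs => rw [← hrep]
      module
    · refine Or.inl (Or.inl ⟨b.coord 0 x, b.coord 1 x, hx 0, hx 1, by linarith, ?_⟩)
      conv_rhs => rw [← hrep]
      module
  · intro hx
    have key : ∀ (P Q : ℝ × ℝ) (j : Fin 3), b.coord j P = 0 → b.coord j Q = 0 →
        x ∈ segment ℝ P Q → P ∈ ({A, B, C} : Set (ℝ × ℝ)) → Q ∈ ({A, B, C} : Set (ℝ × ℝ)) →
        x ∈ convexHull ℝ ({A, B, C} : Set (ℝ × ℝ)) \ {y | ∀ i, 0 < b.coord i y} := by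
      intro P Q j hP hQ hseg hPm hQm
      refine ⟨(convex_convexHull ℝ _).segment_subset (subset_convexHull ℝ _ hPm)
          (subset_convexHull ℝ _ hQm) hseg, ?_⟩
      simp only [mem_setOf_eq, not_forall, not_lt]
      refine ⟨j, le_of_eq ?_⟩
      obtain ⟨u, v, hu, hv, huv, rfl⟩ := hseg
      rw [Convex.combo_affine_apply huv, hP, hQ]
      simp
    rcases hx with (hx | hx) | hx
    · exact key A B 2 (by simp [hcA]) (by simp [hcB]) hx (by simp) (by simp)
    · exact key B C 0 (by simp [hcB]) (by simp [hcC]) hx (by simp) (by simp)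
    · exact key C A 1 (by simp [hcC]) (by simp [hcA]) hx (by simp) (by simp)

lemma ne_of_det2 (a b c : ℤ × ℤ) (h : det2 a b c ≠ 0) : a ≠ b ∧ b ≠ c ∧ a ≠ c := by
  refine ⟨?_, ?_, ?_⟩ <;> rintro rfl <;> apply h <;> unfold det2 <;> ring

lemma boundary_eq (a b c : ℤ × ℤ) (hnd : det2 a b c ≠ 0) :
    {z : ℤ × ℤ | latticeEmbed z ∈ frontier (triZ a b c)} =
      segPts a b ∪ segPts b c ∪ segPts c a := by
  ext z
  rw [mem_setOf_eq, triZ, frontier_tri _ _ _ (affInd a b c hnd)]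
  rfl

lemma boundary_count (a b c : ℤ × ℤ) (hnd : det2 a b c ≠ 0) :
    {z : ℤ × ℤ | latticeEmbed z ∈ frontier (triZ a b c)}.ncard =
      Int.gcd (b.1 - a.1) (b.2 - a.2) + Int.gcd (c.1 - b.1) (c.2 - b.2) +
        Int.gcd (a.1 - c.1) (a.2 - c.2) := by
  obtain ⟨hab, hbc, hac⟩ := ne_of_det2 a b c hnd
  have hnd2 : det2 b c a ≠ 0 := by rw [det2_cyc]; exact hnd
  have hnd3 : det2 c a b ≠ 0 := by rw [det2_cyc, det2_cyc]; exact hnd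
  have f1 := segPts_finite a b hab
  have f2 := segPts_finite b c hbc
  have f3 := segPts_finite c a (Ne.symm hac)
  have I12 : segPts a b ∩ segPts b c = {b} := segPts_inter a b c hnd
  have I23 : segPts b c ∩ segPts c a = {c} := segPts_inter b c a hnd2
  have I31 : segPts c a ∩ segPts a b = {a} := segPts_inter c a b hnd3
  have n1 := segPts_ncard a b hab
  have n2 := segPts_ncard b c hbc
  have n3 := segPts_ncard c a (Ne.symm hac)
  rw [boundary_eq a b c hnd]
  have e12 := Set.ncard_union_add_ncard_inter (segPts a b) (segPts b c) f1 f2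
  rw [I12] at e12
  have e123 := Set.ncard_union_add_ncard_inter (segPts a b ∪ segPts b c) (segPts c a)
    (f1.union f2) f3
  have hinter : (segPts a b ∪ segPts b c) ∩ segPts c a = {a, c} := by
    rw [Set.union_inter_distrib_right, Set.inter_comm (segPts a b) (segPts c a)]
    rw [I31, I23]
    ext x; simp [Set.mem_insert_iff]; tauto
  rw [hinter] at e123
  have hac2 : ({a, c} : Set (ℤ × ℤ)).ncard = 2 := by
    rw [Set.ncard_pair hac]
  rw [hac2] at e123
  have hb1 : ({b} : Set (ℤ × ℤ)).ncard = 1 := Set.ncard_singleton b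
  rw [hb1] at e12
  omega

lemma gcd_unimodular (m11 m12 m21 m22 x y : ℤ) (hdet : (m11 * m22 - m12 * m21).natAbs = 1) :
    Int.gcd (m11 * x + m12 * y) (m21 * x + m22 * y) = Int.gcd x y := by
  have he : m11 * m22 - m12 * m21 = 1 ∨ m11 * m22 - m12 * m21 = -1 := by
    rcases Int.natAbs_eq (m11 * m22 - m12 * m21) with h | h <;> rw [hdet] at h <;> omega
  apply Nat.dvd_antisymm
  · rw [← Int.natCast_dvd_natCast]
    apply Int.dvd_coe_gcd
    · have h1 : (↑(Int.gcd (m11 * x + m12 * y) (m21 * x + m22 * y)) : ℤ) ∣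
          m22 * (m11 * x + m12 * y) - m12 * (m21 * x + m22 * y) :=
        dvd_sub (Dvd.dvd.mul_left (Int.gcd_dvd_left _ _) _) (Dvd.dvd.mul_left (Int.gcd_dvd_right _ _) _)
      have h2 : m22 * (m11 * x + m12 * y) - m12 * (m21 * x + m22 * y) =
          (m11 * m22 - m12 * m21) * x := by ring
      rw [h2] at h1
      rcases he with h | h <;> rw [h] at h1
      · simpa using h1
      · rw [show (-1 : ℤ) * x = -x by ring] at h1
        exact (dvd_neg).mp h1
    · have h1 : (↑(Int.gcd (m11 * x + m12 * y) (m21 * x + m22 * y)) : ℤ) ∣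
          m11 * (m21 * x + m22 * y) - m21 * (m11 * x + m12 * y) :=
        dvd_sub (Dvd.dvd.mul_left (Int.gcd_dvd_right _ _) _) (Dvd.dvd.mul_left (Int.gcd_dvd_left _ _) _)
      have h2 : m11 * (m21 * x + m22 * y) - m21 * (m11 * x + m12 * y) =
          (m11 * m22 - m12 * m21) * y := by ring
      rw [h2] at h1
      rcases he with h | h <;> rw [h] at h1
      · simpa using h1
      · rw [show (-1 : ℤ) * y = -y by ring] at h1
        exact (dvd_neg).mp h1
  · rw [← Int.natCast_dvd_natCast]
    apply Int.dvd_coe_gcd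
    · exact dvd_add (Dvd.dvd.mul_left (Int.gcd_dvd_left _ _) _) (Dvd.dvd.mul_left (Int.gcd_dvd_right _ _) _)
    · exact dvd_add (Dvd.dvd.mul_left (Int.gcd_dvd_left _ _) _) (Dvd.dvd.mul_left (Int.gcd_dvd_right _ _) _)

lemma normal_form (p q r : ℤ × ℤ) (hnd : det2 p q r ≠ 0)
    (h3 : Int.gcd (q.1 - p.1) (q.2 - p.2) = 3)
    (hrq : Int.gcd (r.1 - q.1) (r.2 - q.2) = 1)
    (hpr : Int.gcd (p.1 - r.1) (p.2 - r.2) = 1) :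
    ∃ m11 m12 m21 m22 t1 t2 cc dd : ℤ,
      (m11 * m22 - m12 * m21).natAbs = 1 ∧ 0 < dd ∧
      Int.gcd cc dd = 1 ∧ Int.gcd (cc - 3) dd = 1 ∧
      (fun z : ℤ × ℤ => (m11 * z.1 + m12 * z.2 + t1, m21 * z.1 + m22 * z.2 + t2)) ''
          {p, q, r} = {((0 : ℤ), (0 : ℤ)), ((3 : ℤ), (0 : ℤ)), (cc, dd)} := by
  have hpq : p ≠ q := by
    rintro rfl; simp [Int.gcd] at h3
  obtain ⟨w1, w2, _, hw1, hw2, hwprim⟩ := gcd_decomp p q hpq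
  rw [h3] at hw1 hw2
  push_cast at hw1 hw2
  -- Bezout
  have hbez : w1 * Int.gcdA w1 w2 + w2 * Int.gcdB w1 w2 = 1 := by
    have := Int.gcd_eq_gcd_ab w1 w2
    rw [hwprim] at this; push_cast at this; linarith
  set s := Int.gcdA w1 w2 with hs
  set t := Int.gcdB w1 w2 with ht
  set dd0 : ℤ := w1 * (r.2 - p.2) - w2 * (r.1 - p.1) with hdd0
  have hdet3 : det2 p q r = 3 * dd0 := by
    unfold det2
    rw [hdd0]
    linear_combination (r.2 - p.2) * hw1 - (r.1 - p.1) * hw2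
  have hdd0ne : dd0 ≠ 0 := by
    intro h0; apply hnd; rw [hdet3, h0]; ring
  set e : ℤ := if 0 < dd0 then 1 else -1 with he
  have hee : e = 1 ∧ 0 < dd0 ∨ e = -1 ∧ dd0 < 0 := by
    rcases lt_trichotomy dd0 0 with h | h | h
    · right; exact ⟨by rw [he, if_neg (by omega)], h⟩
    · exact absurd h hdd0ne
    · left; exact ⟨by rw [he, if_pos h], h⟩
  set m11 : ℤ := s
  set m12 : ℤ := t
  set m21 : ℤ := e * (-w2) with hm21
  set m22 : ℤ := e * w1 with hm22
  set cc : ℤ := s * (r.1 - p.1) + t * (r.2 - p.2) with hcc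
  set dd : ℤ := e * dd0 with hdd
  have hddpos : 0 < dd := by
    rcases hee with ⟨h1, h2⟩ | ⟨h1, h2⟩ <;> rw [hdd, h1] <;> omega
  have hdetm : (m11 * m22 - m12 * m21).natAbs = 1 := by
    have : m11 * m22 - m12 * m21 = e * (w1 * s + w2 * t) := by rw [hm21, hm22]; ring
    rw [this, show w1 * s + w2 * t = 1 by linarith [hbez], mul_one]
    rcases hee with ⟨h1, _⟩ | ⟨h1, _⟩ <;> rw [h1] <;> rfl
  -- gcd cc dd = 1
  have hgcd1 : Int.gcd cc dd = 1 := by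
    have hx : cc = m11 * (r.1 - p.1) + m12 * (r.2 - p.2) := by rw [hcc]
    have hy : dd = m21 * (r.1 - p.1) + m22 * (r.2 - p.2) := by
      rw [hdd, hm21, hm22, hdd0]; ring
    rw [hx, hy, gcd_unimodular _ _ _ _ _ _ hdetm]
    rw [show r.1 - p.1 = -(p.1 - r.1) by ring, show r.2 - p.2 = -(p.2 - r.2) by ring,
      Int.neg_gcd, Int.gcd_neg]
    exact hpr
  have hgcd2 : Int.gcd (cc - 3) dd = 1 := by
    have hx : cc - 3 = m11 * (r.1 - q.1) + m12 * (r.2 - q.2) := by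
      rw [hcc]
      have h33 : s * (q.1 - p.1) + t * (q.2 - p.2) = 3 := by
        rw [hw1, hw2]; linear_combination 3 * hbez
      linear_combination h33
    have hy : dd = m21 * (r.1 - q.1) + m22 * (r.2 - q.2) := by
      rw [hdd, hm21, hm22, hdd0]
      linear_combination (e * w1) * hw2 - (e * w2) * hw1
    rw [hx, hy, gcd_unimodular _ _ _ _ _ _ hdetm]
    exact hrq
  refine ⟨m11, m12, m21, m22, -(m11 * p.1 + m12 * p.2), -(m21 * p.1 + m22 * p.2), cc, dd,
    hdetm, hddpos, hgcd1, hgcd2, ?_⟩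
  rw [Set.image_insert_eq, Set.image_insert_eq, Set.image_singleton]
  have hfp : (m11 * p.1 + m12 * p.2 + -(m11 * p.1 + m12 * p.2),
      m21 * p.1 + m22 * p.2 + -(m21 * p.1 + m22 * p.2)) = ((0 : ℤ), (0 : ℤ)) := by
    rw [Prod.mk.injEq]; exact ⟨by ring, by ring⟩
  have hfq : (m11 * q.1 + m12 * q.2 + -(m11 * p.1 + m12 * p.2),
      m21 * q.1 + m22 * q.2 + -(m21 * p.1 + m22 * p.2)) = ((3 : ℤ), (0 : ℤ)) := by
    have e1 : m11 * q.1 + m12 * q.2 + -(m11 * p.1 + m12 * p.2) = 3 := by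
      rw [show m11 * q.1 + m12 * q.2 + -(m11 * p.1 + m12 * p.2)
          = s * (q.1 - p.1) + t * (q.2 - p.2) by ring, hw1, hw2]
      linear_combination 3 * hbez
    have e2 : m21 * q.1 + m22 * q.2 + -(m21 * p.1 + m22 * p.2) = 0 := by
      rw [show m21 * q.1 + m22 * q.2 + -(m21 * p.1 + m22 * p.2)
          = m21 * (q.1 - p.1) + m22 * (q.2 - p.2) by ring, hw1, hw2, hm21, hm22]
      ring
    rw [e1, e2]
  have hfr : (m11 * r.1 + m12 * r.2 + -(m11 * p.1 + m12 * p.2),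
      m21 * r.1 + m22 * r.2 + -(m21 * p.1 + m22 * p.2)) = (cc, dd) := by
    have e1 : m11 * r.1 + m12 * r.2 + -(m11 * p.1 + m12 * p.2) = cc := by
      rw [hcc]; ring
    have e2 : m21 * r.1 + m22 * r.2 + -(m21 * p.1 + m22 * p.2) = dd := by
      rw [hdd, hm21, hm22, hdd0]; ring
    rw [e1, e2]
  rw [hfp, hfq, hfr]

lemma gcd_neg2 (x1 x2 : ℤ) : Int.gcd (-x1) (-x2) = Int.gcd x1 x2 := by
  rw [Int.neg_gcd, Int.gcd_neg]

lemma gcd_parity (x1 x2 y1 y2 : ℤ) (hx : 2 ∣ Int.gcd x1 x2) (hy : 2 ∣ Int.gcd y1 y2) :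
    2 ∣ Int.gcd (x1 + y1) (x2 + y2) := by
  have hx' : (2 : ℤ) ∣ (Int.gcd x1 x2 : ℤ) := by exact_mod_cast hx
  have hy' : (2 : ℤ) ∣ (Int.gcd y1 y2 : ℤ) := by exact_mod_cast hy
  have h1 : (2 : ℤ) ∣ x1 + y1 :=
    dvd_add (hx'.trans (Int.gcd_dvd_left _ _)) (hy'.trans (Int.gcd_dvd_left _ _))
  have h2 : (2 : ℤ) ∣ x2 + y2 :=
    dvd_add (hx'.trans (Int.gcd_dvd_right _ _)) (hy'.trans (Int.gcd_dvd_right _ _))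
  have := Int.dvd_coe_gcd h1 h2
  exact_mod_cast this

set_option maxHeartbeats 2000000 in
/-- a lattice triangle with exactly 5 boundary lattice points and at least
4 interior lattice points has one edge of discrete length 3 and two edges of discrete
length 1, and is lattice-isomorphic (via `x ↦ Mx + t`, `M ∈ GL₂(ℤ)`, `t ∈ ℤ²`) to the
triangle with vertices `(0,0)`, `(3,0)`, `(c,d)` where `d > 0` and
`gcd(c,d) = gcd(c-3,d) = 1`. -/
theorem stmt10 (a b c : ℤ × ℤ) (hnd : det2 a b c ≠ 0)
    (hb : {z : ℤ × ℤ | latticeEmbed z ∈ frontier (triZ a b c)}.ncard = 5)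
    (hi : 4 ≤ {z : ℤ × ℤ | latticeEmbed z ∈ interior (triZ a b c)}.ncard) :
    (∃ p q r : ℤ × ℤ, ({p, q, r} : Set (ℤ × ℤ)) = {a, b, c} ∧
        Int.gcd (q.1 - p.1) (q.2 - p.2) = 3 ∧
        Int.gcd (r.1 - q.1) (r.2 - q.2) = 1 ∧
        Int.gcd (p.1 - r.1) (p.2 - r.2) = 1) ∧
    ∃ m11 m12 m21 m22 t1 t2 cc dd : ℤ,
      (m11 * m22 - m12 * m21).natAbs = 1 ∧ 0 < dd ∧
      Int.gcd cc dd = 1 ∧ Int.gcd (cc - 3) dd = 1 ∧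
      (fun z : ℤ × ℤ => (m11 * z.1 + m12 * z.2 + t1, m21 * z.1 + m22 * z.2 + t2)) ''
          {a, b, c} = {((0 : ℤ), (0 : ℤ)), ((3 : ℤ), (0 : ℤ)), (cc, dd)} := by
  obtain ⟨hab, hbc, hac⟩ := ne_of_det2 a b c hnd
  set g1 := Int.gcd (b.1 - a.1) (b.2 - a.2) with hg1
  set g2 := Int.gcd (c.1 - b.1) (c.2 - b.2) with hg2
  set g3 := Int.gcd (a.1 - c.1) (a.2 - c.2) with hg3
  have hsum : g1 + g2 + g3 = 5 := by
    rw [boundary_count a b c hnd] at hb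
    exact hb
  obtain ⟨-, -, hg1pos, -, -, -⟩ := gcd_decomp a b hab
  obtain ⟨-, -, hg2pos, -, -, -⟩ := gcd_decomp b c hbc
  obtain ⟨-, -, hg3pos, -, -, -⟩ := gcd_decomp c a (Ne.symm hac)
  rw [← hg1] at hg1pos
  rw [← hg2] at hg2pos
  rw [← hg3] at hg3pos
  have h3e : 2 ∣ g1 → 2 ∣ g2 → 2 ∣ g3 := by
    intro h1 h2
    have := gcd_parity (a.1 - b.1) (a.2 - b.2) (b.1 - c.1) (b.2 - c.2)
      (by rw [show a.1 - b.1 = -(b.1 - a.1) by ring, show a.2 - b.2 = -(b.2 - a.2) by ring,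
        gcd_neg2]; exact h1)
      (by rw [show b.1 - c.1 = -(c.1 - b.1) by ring, show b.2 - c.2 = -(c.2 - b.2) by ring,
        gcd_neg2]; exact h2)
    rwa [show a.1 - b.1 + (b.1 - c.1) = a.1 - c.1 by ring,
      show a.2 - b.2 + (b.2 - c.2) = a.2 - c.2 by ring] at this
  have h2e : 2 ∣ g1 → 2 ∣ g3 → 2 ∣ g2 := by
    intro h1 h3
    have := gcd_parity (c.1 - a.1) (c.2 - a.2) (a.1 - b.1) (a.2 - b.2)
      (by rw [show c.1 - a.1 = -(a.1 - c.1) by ring, show c.2 - a.2 = -(a.2 - c.2) by ring,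
        gcd_neg2]; exact h3)
      (by rw [show a.1 - b.1 = -(b.1 - a.1) by ring, show a.2 - b.2 = -(b.2 - a.2) by ring,
        gcd_neg2]; exact h1)
    rwa [show c.1 - a.1 + (a.1 - b.1) = c.1 - b.1 by ring,
      show c.2 - a.2 + (a.2 - b.2) = c.2 - b.2 by ring] at this
  have h1e : 2 ∣ g2 → 2 ∣ g3 → 2 ∣ g1 := by
    intro h2 h3
    have := gcd_parity (b.1 - c.1) (b.2 - c.2) (c.1 - a.1) (c.2 - a.2)
      (by rw [show b.1 - c.1 = -(c.1 - b.1) by ring, show b.2 - c.2 = -(c.2 - b.2) by ring,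
        gcd_neg2]; exact h2)
      (by rw [show c.1 - a.1 = -(a.1 - c.1) by ring, show c.2 - a.2 = -(a.2 - c.2) by ring,
        gcd_neg2]; exact h3)
    rwa [show b.1 - c.1 + (c.1 - a.1) = b.1 - a.1 by ring,
      show b.2 - c.2 + (c.2 - a.2) = b.2 - a.2 by ring] at this
  have hdisj : (g1 = 3 ∧ g2 = 1 ∧ g3 = 1) ∨ (g2 = 3 ∧ g3 = 1 ∧ g1 = 1) ∨
      (g3 = 3 ∧ g1 = 1 ∧ g2 = 1) ∨ (2 ∣ g1 ∧ 2 ∣ g2) ∨ (2 ∣ g1 ∧ 2 ∣ g3) ∨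
      (2 ∣ g2 ∧ 2 ∣ g3) := by omega
  have hcase : (g1 = 3 ∧ g2 = 1 ∧ g3 = 1) ∨ (g2 = 3 ∧ g3 = 1 ∧ g1 = 1) ∨
      (g3 = 3 ∧ g1 = 1 ∧ g2 = 1) := by
    rcases hdisj with h | h | h | ⟨h1, h2⟩ | ⟨h1, h3⟩ | ⟨h2, h3⟩
    · exact Or.inl h
    · exact Or.inr (Or.inl h)
    · exact Or.inr (Or.inr h)
    · have h3 := h3e h1 h2; omega
    · have h2 := h2e h1 h3; omega
    · have h1 := h1e h2 h3; omega
  have hnd2 : det2 b c a ≠ 0 := by rw [det2_cyc]; exact hnd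
  have hnd3 : det2 c a b ≠ 0 := by rw [det2_cyc, det2_cyc]; exact hnd
  rcases hcase with ⟨e1, e2, e3⟩ | ⟨e1, e2, e3⟩ | ⟨e1, e2, e3⟩
  · exact ⟨⟨a, b, c, rfl, e1, e2, e3⟩, normal_form a b c hnd e1 e2 e3⟩
  · have hset : ({b, c, a} : Set (ℤ × ℤ)) = {a, b, c} := by
      rw [Set.pair_comm c a, Set.insert_comm b a]
    refine ⟨⟨b, c, a, hset, e1, e2, e3⟩, ?_⟩
    obtain ⟨m11, m12, m21, m22, t1, t2, cc, dd, h₁, h₂, h₃, h₄, h₅⟩ :=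
      normal_form b c a hnd2 e1 e2 e3
    rw [hset] at h₅
    exact ⟨m11, m12, m21, m22, t1, t2, cc, dd, h₁, h₂, h₃, h₄, h₅⟩
  · have hset : ({c, a, b} : Set (ℤ × ℤ)) = {a, b, c} := by
      rw [Set.insert_comm c a, Set.pair_comm c b]
    refine ⟨⟨c, a, b, hset, e1, e2, e3⟩, ?_⟩
    obtain ⟨m11, m12, m21, m22, t1, t2, cc, dd, h₁, h₂, h₃, h₄, h₅⟩ :=
      normal_form c a b hnd3 e1 e2 e3
    rw [hset] at h₅
    exact ⟨m11, m12, m21, m22, t1, t2, cc, dd, h₁, h₂, h₃, h₄, h₅⟩
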